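/- For every word w over {L,R}, every letter W ∈ {L,R}, and every convex function ψ : ℤ → ℝ (i.e. d ↦ ψ(d+1) − ψ(d) is nondecreasing), Σ_{d∈ℤ} ψ(d)·P_w(d) ≤ Σ_{d∈ℤ} ψ(d)·P_{wW}(d), where wW denotes the word w with the letter W appended; the sums are finite since each P_w is finitely supported. -/

import Mathlib

/-- The probability mass functions `P t` on ℤ, defined by
`P 1 = δ₀`, `P (2t) = P t`, `P (2t+1) d = ½ P (t+1) (d+1) + ½ P t (d-1)`. -/
noncomputable def P : ℕ → ℤ → ℝ
  | 0, _ => 0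
  | 1, d => if d = 0 then 1 else 0
  | (n+2), d =>
      if h : (n + 2) % 2 = 0 then P ((n+2)/2) d
      else (1/2) * P ((n+2)/2 + 1) (d+1) + (1/2) * P ((n+2)/2) (d-1)
  decreasing_by all_goals omega

/-- Letters of the alphabet. -/
inductive LR | L | R
deriving DecidableEq

/-- One step of the identification of words with odd integers: `L : t ↦ 2t-1`, `R : t ↦ 2t+1`. -/
def LRstep (t : ℕ) : LR → ℕ
  | LR.L => 2 * t - 1
  | LR.R => 2 * t + 1

/-- The odd integer associated to a word over `{L,R}`, starting from 3. -/
def hword (w : List LR) : ℕ := w.foldl LRstep 3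

lemma P_one (d : ℤ) : P 1 d = if d = 0 then 1 else 0 := by rw [P]

lemma P_even (t : ℕ) (ht : 1 ≤ t) (d : ℤ) : P (2*t) d = P t d := by
  obtain ⟨k, rfl⟩ := Nat.exists_eq_add_of_le ht
  rw [show 2*(1+k) = (2*k)+2 by ring, P]
  simp [Nat.add_comm]

lemma P_odd (t : ℕ) (ht : 1 ≤ t) (d : ℤ) :
    P (2*t+1) d = (1/2) * P (t+1) (d+1) + (1/2) * P t (d-1) := by
  obtain ⟨k, rfl⟩ := Nat.exists_eq_add_of_le ht
  rw [show 2*(1+k)+1 = (2*k+1)+2 by ring, P]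
  have h1 : (2*k+1+2) % 2 = 1 := by omega
  have h2 : (2*k+1+2)/2 = 1 + k := by omega
  simp [h1, h2]

lemma P_nonneg (t : ℕ) (d : ℤ) : 0 ≤ P t d := by
  induction t, d using P.induct with
  | case1 d => simp [P]
  | case2 => rw [P]; positivity
  | case3 d hd => rw [P]; positivity
  | case4 n d h ih => rw [P]; simpa [h] using ih
  | case5 n d h ih1 ih2 => rw [P]; simp only [h, dite_false]; positivity

lemma P_support : ∀ (t : ℕ) (d : ℤ), (t : ℤ) ≤ |d| → P t d = 0 := by
  intro t d
  induction t, d using P.induct with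
  | case1 d => simp [P]
  | case2 => intro hd; simp at hd
  | case3 d h => intro _; rw [P]; simp [h]
  | case4 n d h ih =>
      intro hd
      rw [P]; simp only [h, dite_true]
      refine ih (le_trans ?_ hd)
      have := Nat.div_le_self (n+2) 2
      push_cast
      omega
  | case5 n d h ih1 ih2 =>
      intro hd
      rw [P]; simp only [h, dite_false]
      obtain ⟨k, hk, hk1⟩ : ∃ k, (n+2)/2 = k ∧ n + 2 = 2*k+1 := ⟨(n+2)/2, rfl, by omega⟩
      have habs : (2*(k:ℤ)+1) ≤ |d| := le_trans (by push_cast [← hk1]; omega) hd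
      rw [hk] at ih1 ih2 ⊢
      have h1 : ((k:ℤ) + 1) ≤ |d + 1| := by
        rcases abs_cases d with ⟨he, _⟩ | ⟨he, _⟩ <;>
          rcases abs_cases (d+1) with ⟨hf, _⟩ | ⟨hf, _⟩ <;> omega
      have h2 : ((k:ℤ)) ≤ |d - 1| := by
        rcases abs_cases d with ⟨he, _⟩ | ⟨he, _⟩ <;>
          rcases abs_cases (d-1) with ⟨hf, _⟩ | ⟨hf, _⟩ <;> omega
      rw [ih1 (by push_cast; exact h1), ih2 h2]; ring

/-- The integral of `ψ` against `P t`. -/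
noncomputable def S (t : ℕ) (ψ : ℤ → ℝ) : ℝ := ∑' d : ℤ, ψ d * P t d

lemma summable_P' (t : ℕ) (ψ : ℤ → ℝ) (c : ℤ) :
    Summable (fun d : ℤ => ψ d * P t (d + c)) := by
  apply summable_of_ne_finset_zero (s := Finset.Icc (-(t:ℤ) - |c|) ((t:ℤ) + |c|))
  intro d hd
  rw [P_support t (d + c), mul_zero]
  simp only [Finset.mem_Icc, not_and_or, not_le] at hd
  rcases abs_cases d with ⟨he, _⟩ | ⟨he, _⟩ <;> rcases abs_cases c with ⟨hc, _⟩ | ⟨hc, _⟩ <;>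
    rcases abs_cases (d + c) with ⟨hf, _⟩ | ⟨hf, _⟩ <;> omega

lemma summable_P (t : ℕ) (ψ : ℤ → ℝ) : Summable (fun d : ℤ => ψ d * P t d) := by
  simpa using summable_P' t ψ 0

lemma shift_tsum (f : ℤ → ℝ) (c : ℤ) : ∑' d : ℤ, f (d + c) = ∑' d : ℤ, f d :=
  (Equiv.addRight c).tsum_eq f

lemma S_one (ψ : ℤ → ℝ) : S 1 ψ = ψ 0 := by
  unfold S
  rw [tsum_eq_single 0 (fun b hb => by rw [P_one]; simp [hb])]
  rw [P_one]; simp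

lemma S_even (t : ℕ) (ht : 1 ≤ t) (ψ : ℤ → ℝ) : S (2*t) ψ = S t ψ :=
  tsum_congr fun d => by rw [P_even t ht d]

/-- `S (2t+1) ψ = ½ S (t+1) ψ₋ + ½ S t ψ₊`. -/
lemma S_odd (t : ℕ) (ht : 1 ≤ t) (ψ : ℤ → ℝ) :
    S (2*t+1) ψ = (1/2) * S (t+1) (fun d => ψ (d - 1)) + (1/2) * S t (fun d => ψ (d + 1)) := by
  have h1 : Summable fun d : ℤ => (1/2) * (ψ d * P (t+1) (d+1)) :=
    (summable_P' (t+1) ψ 1).mul_left (1/2 : ℝ)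
  have h2 : Summable fun d : ℤ => (1/2) * (ψ d * P t (d-1)) := by
    have h := (summable_P' t ψ (-1)).mul_left (1/2 : ℝ)
    exact h.congr (fun d => by rw [← sub_eq_add_neg])
  have e1 : ∑' d : ℤ, ψ (d - 1) * P (t+1) d = ∑' d : ℤ, ψ d * P (t+1) (d+1) := by
    rw [← shift_tsum (fun d => ψ (d - 1) * P (t+1) d) 1]
    simp
  have e2 : ∑' d : ℤ, ψ (d + 1) * P t d = ∑' d : ℤ, ψ d * P t (d-1) := by
    rw [← shift_tsum (fun d => ψ (d + 1) * P t d) (-1)]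
    simp only [← sub_eq_add_neg]
    simp
  calc S (2*t+1) ψ
      = ∑' d : ℤ, ((1/2) * (ψ d * P (t+1) (d+1)) + (1/2) * (ψ d * P t (d-1))) := by
        unfold S; exact tsum_congr fun d => by rw [P_odd t ht d]; ring
    _ = (1/2) * ∑' d : ℤ, ψ d * P (t+1) (d+1) + (1/2) * ∑' d : ℤ, ψ d * P t (d-1) := by
        rw [Summable.tsum_add h1 h2, tsum_mul_left, tsum_mul_left]
    _ = _ := by unfold S; rw [e1, e2]

/-- Convexity gives `S t ψ ≤ ½ S t ψ₋ + ½ S t ψ₊`. -/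
lemma S_conv (t : ℕ) (ψ : ℤ → ℝ) (hc : Monotone fun d : ℤ => ψ (d + 1) - ψ d) :
    S t ψ ≤ (1/2) * S t (fun d => ψ (d - 1)) + (1/2) * S t (fun d => ψ (d + 1)) := by
  have h1 : Summable fun d : ℤ => (1/2) * (ψ (d-1) * P t d) :=
    (summable_P t (fun d => ψ (d-1))).mul_left (1/2 : ℝ)
  have h2 : Summable fun d : ℤ => (1/2) * (ψ (d+1) * P t d) :=
    (summable_P t (fun d => ψ (d+1))).mul_left (1/2 : ℝ)
  have key : S t ψ ≤ ∑' d : ℤ, ((1/2) * (ψ (d-1) * P t d) + (1/2) * (ψ (d+1) * P t d)) := by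
    refine Summable.tsum_le_tsum (fun d => ?_) (summable_P t ψ) (h1.add h2)
    have hcv := hc (show d - 1 ≤ d by omega)
    simp only [sub_add_cancel] at hcv
    have hP := P_nonneg t d
    nlinarith [hcv, hP]
  calc S t ψ ≤ ∑' d : ℤ, ((1/2) * (ψ (d-1) * P t d) + (1/2) * (ψ (d+1) * P t d)) := key
    _ = _ := by unfold S; rw [Summable.tsum_add h1 h2, tsum_mul_left, tsum_mul_left]

lemma conv_shift (ψ : ℤ → ℝ) (hc : Monotone fun d : ℤ => ψ (d + 1) - ψ d) (c : ℤ) :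
    Monotone fun d : ℤ => ψ (d + c + 1) - ψ (d + c) := by
  intro a b hab
  have := hc (show a + c ≤ b + c by omega)
  simpa using this

/-- The key induction: for `t ≥ 1` and convex `ψ`,
`S t ψ ≤ S (2t+1) ψ` and `S (t+1) ψ ≤ S (2t+1) ψ`. -/
lemma key_ind : ∀ t : ℕ, 1 ≤ t → ∀ ψ : ℤ → ℝ, (Monotone fun d : ℤ => ψ (d + 1) - ψ d) →
    S t ψ ≤ S (2*t+1) ψ ∧ S (t+1) ψ ≤ S (2*t+1) ψ := by
  intro t
  induction t using Nat.strong_induction_on with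
  | _ t IH =>
    intro ht ψ hc
    have hcm : Monotone fun d : ℤ => (fun d => ψ (d - 1)) (d + 1) - (fun d => ψ (d - 1)) d := by
      have := conv_shift ψ hc (-1)
      simpa [sub_eq_add_neg, add_right_comm] using this
    have hcp : Monotone fun d : ℤ => (fun d => ψ (d + 1)) (d + 1) - (fun d => ψ (d + 1)) d := by
      have := conv_shift ψ hc 1
      simpa [add_right_comm] using this
    rcases Nat.even_or_odd' t with ⟨s, hs | hs⟩
    · -- t = 2s, s ≥ 1
      subst hs
      have hs1 : 1 ≤ s := by omega
      rw [S_odd (2*s) (by omega) ψ]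
      have hIH := IH s (by omega) hs1 (fun d => ψ (d - 1)) hcm
      have hconv := S_conv s ψ hc
      constructor
      · rw [S_even s hs1 ψ]
        have h2 : S (2*s) (fun d => ψ (d + 1)) = S s (fun d => ψ (d + 1)) :=
          S_even s hs1 _
        rw [h2]
        linarith [hIH.1, hconv]
      · rw [S_odd s hs1 ψ]
        have h2 : S (2*s) (fun d => ψ (d + 1)) = S s (fun d => ψ (d + 1)) :=
          S_even s hs1 _
        rw [h2]
        linarith [hIH.2]
    · -- t = 2s+1
      subst hs
      rcases Nat.eq_zero_or_pos s with rfl | hs1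
      · -- base case t = 1
        have e3 : S (2*(2*0+1)+1) ψ = (1/2) * S 1 (fun d => ψ (d - 1)) + (1/2) * S 1 (fun d => ψ (d + 1)) := by
          rw [show 2*(2*0+1)+1 = 2*1+1 by norm_num, S_odd 1 le_rfl ψ,
            show (1+1 : ℕ) = 2*1 by norm_num, S_even 1 le_rfl]
        have hb : ψ 0 ≤ (1/2) * ψ (-1) + (1/2) * ψ 1 := by
          have := hc (show (-1 : ℤ) ≤ 0 by omega)
          simp only at this
          norm_num at this
          linarith
        constructor
        · rw [show (2*0+1 : ℕ) = 1 by norm_num, e3, S_one, S_one, S_one]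
          simpa using hb
        · rw [show (2*0+1+1 : ℕ) = 2*1 by norm_num, S_even 1 le_rfl, e3, S_one, S_one, S_one]
          simpa using hb
      · -- s ≥ 1
        rw [S_odd (2*s+1) (by omega) ψ,
          show 2*s+1+1 = 2*(s+1) by ring, S_even (s+1) (by omega)]
        have hIH := IH s (by omega) hs1 (fun d => ψ (d + 1)) hcp
        constructor
        · rw [S_odd s hs1 ψ]
          linarith [hIH.1]
        · have hconv := S_conv (s+1) ψ hc
          rw [S_even (s+1) (by omega) ψ]
          linarith [hIH.2, hconv]

lemma hword_aux : ∀ (w : List LR) (t : ℕ), 3 ≤ t → t % 2 = 1 →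
    3 ≤ w.foldl LRstep t ∧ (w.foldl LRstep t) % 2 = 1 := by
  intro w
  induction w with
  | nil => intro t h1 h2; exact ⟨h1, h2⟩
  | cons a w ih =>
      intro t h1 h2
      rw [List.foldl_cons]
      cases a <;> exact ih _ (by simp [LRstep]; omega) (by simp [LRstep] <;> omega)

/-- The peacock property: for every convex `ψ : ℤ → ℝ` (first differences nondecreasing),
appending a letter to a word increases the integral of `ψ` against `P_w`. -/
theorem peacock (w : List LR) (W : LR) (ψ : ℤ → ℝ)
    (hconvex : Monotone fun d : ℤ => ψ (d + 1) - ψ d) :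
    (∑' d : ℤ, ψ d * P (hword w) d) ≤ ∑' d : ℤ, ψ d * P (hword (w ++ [W])) d := by
  obtain ⟨hw1, hw2⟩ : 3 ≤ hword w ∧ hword w % 2 = 1 := hword_aux w 3 le_rfl rfl
  have happ : hword (w ++ [W]) = LRstep (hword w) W := by
    simp [hword, List.foldl_append]
  show S (hword w) ψ ≤ S (hword (w ++ [W])) ψ
  rw [happ]
  cases W with
  | R =>
      show S (hword w) ψ ≤ S (2 * hword w + 1) ψ
      exact (key_ind (hword w) (by omega) ψ hconvex).1
  | L =>
      obtain ⟨s, hs, hs1⟩ : ∃ s, hword w = 2*s+1 ∧ 1 ≤ s := ⟨hword w / 2, by omega, by omega⟩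
      have e : LRstep (hword w) LR.L = 2*(2*s)+1 := by simp [LRstep]; omega
      rw [e, hs]
      exact (key_ind (2*s) (by omega) ψ hconvex).2
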